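/- Under Assumption 1, for every k ∈ ℕ one has P(Sⁱ = k) = k · [P(S₊ⁱ = k − 1) − P(S₊ⁱ = k)], and the same identity holds with S₊ⁱ replaced by S₋ⁱ. -/

import Mathlib

open MeasureTheory Filter Set ENNReal

noncomputable section

/-- The cluster `C(ω) = {t : I_t(ω) = 1}` of a binary process. -/
def clusterSet {Ω : Type*} (I : ℤ → Ω → Bool) (ω : Ω) : Set ℤ :=
  {t : ℤ | I t ω = true}

/-- Inspected cluster size `Sⁱ(ω) = Σ_{t ∈ ℤ} I_t(ω) ∈ ℕ ∪ {∞}`. -/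
def SiFn {Ω : Type*} (I : ℤ → Ω → Bool) (ω : Ω) : ℕ∞ :=
  {t : ℤ | I t ω = true}.encard

/-- Forward inspected cluster size `S₊ⁱ(ω) = Σ_{t ≥ 1} I_t(ω) ∈ ℕ₀ ∪ {∞}`. -/
def SplusFn {Ω : Type*} (I : ℤ → Ω → Bool) (ω : Ω) : ℕ∞ :=
  {t : ℤ | 0 < t ∧ I t ω = true}.encard

/-- Backward inspected cluster size `S₋ⁱ(ω) = Σ_{t ≤ -1} I_t(ω) ∈ ℕ₀ ∪ {∞}`. -/
def SminusFn {Ω : Type*} (I : ℤ → Ω → Bool) (ω : Ω) : ℕ∞ :=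
  {t : ℤ | t < 0 ∧ I t ω = true}.encard

namespace ClusterAux

variable {Ω : Type*} [MeasurableSpace Ω]

/-- Half-infinite cylinder event: the pattern of `I` agrees with the indicator of `K`
on all `t` that are at least some element of `K` (i.e. `t ≥ min K`). -/
def hcyl (I : ℤ → Ω → Bool) (K : Finset ℤ) : Set Ω :=
  {ω | ∀ t : ℤ, (∃ u ∈ K, u ≤ t) → I t ω = decide (t ∈ K)}

lemma measurableSet_hcyl {I : ℤ → Ω → Bool} (hI : ∀ t, Measurable (I t)) (K : Finset ℤ) :
    MeasurableSet (hcyl I K) := by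
  have : hcyl I K = ⋂ t : ℤ, {ω | (∃ u ∈ K, u ≤ t) → I t ω = decide (t ∈ K)} := by
    ext ω; simp [hcyl]
  rw [this]
  refine MeasurableSet.iInter fun t => ?_
  by_cases h : ∃ u ∈ K, u ≤ t
  · have : {ω : Ω | (∃ u ∈ K, u ≤ t) → I t ω = decide (t ∈ K)}
        = (I t) ⁻¹' {decide (t ∈ K)} := by ext ω; simp [h]
    rw [this]; exact (hI t) (measurableSet_singleton _)
  · have : {ω : Ω | (∃ u ∈ K, u ≤ t) → I t ω = decide (t ∈ K)} = univ := by
      ext ω; simp [h]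
    rw [this]; exact MeasurableSet.univ

section Shift

variable (P : Measure Ω) [IsProbabilityMeasure P]
    (I : ℤ → Ω → Bool)
    {Ωn : ℕ → Type*} [∀ n, MeasurableSpace (Ωn n)]
    (Pn : ∀ n, Measure (Ωn n))
    (In : ∀ n, ℤ → Ωn n → Bool)
    (hstat : ∀ n (F : Finset ℤ) (ε : ℤ → Bool) (k : ℤ),
      Pn n {ω | ∀ t ∈ F, In n t ω = ε t} = Pn n {ω | ∀ t ∈ F, In n (t + k) ω = ε t})
    (hconv : ∀ (F : Finset ℤ) (ε : ℤ → Bool),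
      Tendsto (fun n =>
          Pn n ({ω | ∀ t ∈ F, In n t ω = ε t} ∩ {ω | In n 0 ω = true})
            / Pn n {ω | In n 0 ω = true}) atTop
        (nhds (P {ω | ∀ t ∈ F, I t ω = ε t})))

include hstat hconv in
lemma shift_finite (F : Finset ℤ) (ε : ℤ → Bool) (s : ℤ)
    (h0 : 0 ∈ F) (hs : s ∈ F) (hε0 : ε 0 = true) (hεs : ε s = true) :
    P {ω | ∀ t ∈ F, I t ω = ε t} = P {ω | ∀ t ∈ F, I (t - s) ω = ε t} := by
  set F' : Finset ℤ := F.image (· - s) with hF'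
  set ε' : ℤ → Bool := fun u => ε (u + s) with hε'
  have h0' : (0 : ℤ) ∈ F' := by
    refine Finset.mem_image.2 ⟨s, hs, by simp⟩
  have hmem : ∀ n, {ω | ∀ t ∈ F, In n t ω = ε t} ⊆ {ω | In n 0 ω = true} := by
    intro n ω hω
    have := hω 0 h0
    simpa [hε0] using this
  have hmem' : ∀ n, {ω | ∀ u ∈ F', In n u ω = ε' u} ⊆ {ω | In n 0 ω = true} := by
    intro n ω hω
    have := hω 0 h0'
    simpa [hε', hεs] using this
  have hEq : ∀ n, {ω : Ωn n | ∀ u ∈ F', In n u ω = ε' u}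
      = {ω | ∀ t ∈ F, In n (t + (-s)) ω = ε t} := by
    intro n
    ext ω
    simp only [mem_setOf_eq, hF', Finset.mem_image]
    constructor
    · intro h t ht
      have := h (t - s) ⟨t, ht, rfl⟩
      simpa [hε', sub_eq_add_neg] using this
    · rintro h u ⟨t, ht, rfl⟩
      have := h t ht
      simpa [hε', sub_eq_add_neg] using this
  have h1 := hconv F ε
  have h2 := hconv F' ε'
  rw [tendsto_congr (fun n => by rw [inter_eq_self_of_subset_left (hmem n)])] at h1
  rw [tendsto_congr (fun n => by rw [inter_eq_self_of_subset_left (hmem' n)])] at h2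
  have hseq : ∀ n, Pn n {ω | ∀ u ∈ F', In n u ω = ε' u}
      = Pn n {ω | ∀ t ∈ F, In n t ω = ε t} := by
    intro n
    rw [hEq n, ← hstat n F ε (-s)]
  rw [tendsto_congr (fun n => by rw [hseq n])] at h2
  have hlim : {ω | ∀ u ∈ F', I u ω = ε' u} = {ω | ∀ t ∈ F, I (t - s) ω = ε t} := by
    ext ω
    simp only [mem_setOf_eq, hF', Finset.mem_image]
    constructor
    · intro h t ht
      have := h (t - s) ⟨t, ht, rfl⟩
      simpa [hε', sub_eq_add_neg] using this
    · rintro h u ⟨t, ht, rfl⟩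
      have := h t ht
      simpa [hε', sub_eq_add_neg] using this
  rw [hlim] at h2
  exact tendsto_nhds_unique h1 h2

include hstat hconv in
lemma shift_hcyl (hI : ∀ t, Measurable (I t)) (K : Finset ℤ) (s : ℤ)
    (h0 : 0 ∈ K) (hs : s ∈ K) :
    P (hcyl I K) = P (hcyl I (K.image (· - s))) := by
  have hne : K.Nonempty := ⟨0, h0⟩
  set a : ℤ := K.min' hne with ha
  have haK : a ∈ K := K.min'_mem hne
  have ha0 : a ≤ 0 := K.min'_le 0 h0
  have has : a ≤ s := K.min'_le s hs
  set A : ℕ → Set Ω := fun n => {ω | ∀ t ∈ Finset.Icc a (n : ℤ), I t ω = decide (t ∈ K)}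
    with hA
  set B : ℕ → Set Ω := fun n => {ω | ∀ t ∈ Finset.Icc a (n : ℤ), I (t - s) ω = decide (t ∈ K)}
    with hB
  have hmemKs : ∀ v : ℤ, v ∈ K.image (· - s) ↔ v + s ∈ K := by
    intro v
    simp only [Finset.mem_image]
    constructor
    · rintro ⟨w, hw, rfl⟩; simpa using hw
    · intro h; exact ⟨v + s, h, by ring⟩
  have hIA : hcyl I K = ⋂ n, A n := by
    ext ω
    simp only [hcyl, mem_setOf_eq, mem_iInter, hA, Finset.mem_Icc]
    constructor
    · intro h n t ⟨h1, _⟩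
      exact h t ⟨a, haK, h1⟩
    · rintro h t ⟨u, huK, hut⟩
      exact h t.toNat t ⟨le_trans (K.min'_le u huK) hut, Int.self_le_toNat t⟩
  have hIB : hcyl I (K.image (· - s)) = ⋂ n, B n := by
    ext ω
    simp only [hcyl, mem_setOf_eq, mem_iInter, hB, Finset.mem_Icc]
    constructor
    · intro h n t ⟨h1, _⟩
      have : I (t - s) ω = decide (t - s ∈ K.image (· - s)) :=
        h (t - s) ⟨a - s, Finset.mem_image.2 ⟨a, haK, rfl⟩, by omega⟩
      rw [this]
      simp only [hmemKs, sub_add_cancel]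
    · rintro h v ⟨u', hu', hu'v⟩
      obtain ⟨u, huK, rfl⟩ := Finset.mem_image.1 hu'
      have hav : a ≤ v + s := by
        have := K.min'_le u huK; omega
      have := h (v + s).toNat (v + s) ⟨hav, Int.self_le_toNat _⟩
      have hvs : v + s - s = v := by ring
      rw [hvs] at this
      rw [this]
      simp only [hmemKs, sub_add_cancel]
  have hAm : ∀ n, MeasurableSet (A n) := by
    intro n
    have : A n = ⋂ t ∈ Finset.Icc a (n : ℤ), (I t) ⁻¹' {decide (t ∈ K)} := by
      ext ω; simp [hA]
    rw [this]
    exact MeasurableSet.biInter (Finset.Icc a (n:ℤ)).countable_toSet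
      (fun t _ => (hI t) (measurableSet_singleton _))
  have hBm : ∀ n, MeasurableSet (B n) := by
    intro n
    have : B n = ⋂ t ∈ Finset.Icc a (n : ℤ), (I (t - s)) ⁻¹' {decide (t ∈ K)} := by
      ext ω; simp [hB]
    rw [this]
    exact MeasurableSet.biInter (Finset.Icc a (n:ℤ)).countable_toSet
      (fun t _ => (hI (t - s)) (measurableSet_singleton _))
  have hAanti : Antitone A := by
    intro n m hnm ω hω t ht
    refine hω t ?_
    simp only [Finset.mem_Icc] at ht ⊢
    exact ⟨ht.1, le_trans ht.2 (by exact_mod_cast hnm)⟩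
  have hBanti : Antitone B := by
    intro n m hnm ω hω t ht
    refine hω t ?_
    simp only [Finset.mem_Icc] at ht ⊢
    exact ⟨ht.1, le_trans ht.2 (by exact_mod_cast hnm)⟩
  have htA : Tendsto (fun n => P (A n)) atTop (nhds (P (hcyl I K))) := by
    rw [hIA]
    exact tendsto_measure_iInter_atTop (fun n => (hAm n).nullMeasurableSet) hAanti
      ⟨0, measure_ne_top P _⟩
  have htB : Tendsto (fun n => P (B n)) atTop (nhds (P (hcyl I (K.image (· - s))))) := by
    rw [hIB]
    exact tendsto_measure_iInter_atTop (fun n => (hBm n).nullMeasurableSet) hBanti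
      ⟨0, measure_ne_top P _⟩
  have heq : ∀ᶠ n in atTop, P (A n) = P (B n) := by
    filter_upwards [eventually_ge_atTop s.toNat] with n hn
    refine shift_finite P I Pn In hstat hconv (Finset.Icc a (n : ℤ))
      (fun t => decide (t ∈ K)) s ?_ ?_ (by simp [h0]) (by simp [hs])
    · simp only [Finset.mem_Icc]
      exact ⟨ha0, by positivity⟩
    · simp only [Finset.mem_Icc]
      refine ⟨has, le_trans (Int.self_le_toNat s) (by exact_mod_cast hn)⟩
  have heq' : (fun n => P (A n)) =ᶠ[atTop] (fun n => P (B n)) := heq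
  exact tendsto_nhds_unique htA (Tendsto.congr' heq'.symm htB)

end Shift


/-- Selecting the `j` largest elements of a set of negative integers with at least `j` elements. -/
lemma topj (j : ℕ) (S : Set ℤ) (hS : S ⊆ Set.Iio 0) (hj : (j : ℕ∞) ≤ S.encard) :
    ∃ F : Finset ℤ, ↑F ⊆ S ∧ F.card = j ∧ ∀ x ∈ S, x ∉ F → ∀ y ∈ F, x < y := by
  induction j generalizing S with
  | zero => exact ⟨∅, by simp, rfl, by simp⟩
  | succ j ih =>
    have hSne : S.Nonempty := by
      rw [← Set.one_le_encard_iff_nonempty]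
      refine le_trans ?_ hj
      exact_mod_cast Nat.one_le_iff_ne_zero.2 (Nat.succ_ne_zero j)
    obtain ⟨g, hgS, hgmax⟩ := Int.exists_greatest_of_bdd
      (P := fun z => z ∈ S) ⟨0, fun z hz => le_of_lt (hS hz)⟩ hSne
    have hcard : (S \ {g}).encard + 1 = S.encard := Set.encard_diff_singleton_add_one hgS
    have hj' : (j : ℕ∞) ≤ (S \ {g}).encard := by
      have : (j : ℕ∞) + 1 ≤ (S \ {g}).encard + 1 := by
        rw [hcard]
        exact_mod_cast hj
      exact (WithTop.add_le_add_iff_right (by simp : (1:ℕ∞) ≠ ⊤)).1 this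
    obtain ⟨F', hF'S, hF'card, hF'max⟩ := ih (S \ {g}) (fun x hx => hS hx.1) hj'
    have hgF' : g ∉ F' := fun h => (hF'S h).2 rfl
    refine ⟨insert g F', ?_, ?_, ?_⟩
    · intro x hx
      rcases Finset.mem_insert.1 (by exact_mod_cast hx) with rfl | hx'
      · exact hgS
      · exact (hF'S hx').1
    · rw [Finset.card_insert_of_notMem hgF', hF'card]
    · intro x hxS hxF y hyF
      rcases Finset.mem_insert.1 hyF with rfl | hy'
      · have hxg : x ≠ y := fun h => hxF (h ▸ Finset.mem_insert_self _ _)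
        exact lt_of_le_of_ne (hgmax x hxS) hxg
      · refine hF'max x ⟨hxS, ?_⟩ (fun h => hxF (Finset.mem_insert_of_mem h)) y hy'
        intro h
        exact hxF (by rw [Set.mem_singleton_iff] at h; rw [h]; exact Finset.mem_insert_self _ _)

/-- Index type: finite subsets of `ℤ` containing `0`, with `j` negative and `m` positive
elements. -/
def Idx (j m : ℕ) : Type :=
  {K : Finset ℤ // 0 ∈ K ∧ (K.filter fun t => t < 0).card = j ∧ (K.filter fun t => 0 < t).card = m}

instance (j m : ℕ) : Countable (Idx j m) := by
  unfold Idx; infer_instance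

variable {Ω : Type*} [MeasurableSpace Ω]

lemma hcyl_pos {I : ℤ → Ω → Bool} {K : Finset ℤ} (h0 : 0 ∈ K) {ω : Ω} (hω : ω ∈ hcyl I K) :
    {t : ℤ | 0 < t ∧ I t ω = true} = ↑(K.filter fun t => 0 < t) := by
  ext t
  simp only [Set.mem_setOf_eq, Finset.coe_filter, Set.mem_setOf_eq]
  constructor
  · rintro ⟨ht, hIt⟩
    have := hω t ⟨0, h0, le_of_lt ht⟩
    rw [hIt] at this
    exact ⟨by simpa using this.symm, ht⟩
  · rintro ⟨htK, ht⟩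
    have := hω t ⟨0, h0, le_of_lt ht⟩
    exact ⟨ht, by simp [this, htK]⟩

lemma hcyl_zero {I : ℤ → Ω → Bool} {K : Finset ℤ} (h0 : 0 ∈ K) {ω : Ω} (hω : ω ∈ hcyl I K) :
    I 0 ω = true := by
  have := hω 0 ⟨0, h0, le_refl 0⟩
  simp [h0] at this
  exact this

lemma hcyl_negsub {I : ℤ → Ω → Bool} {K : Finset ℤ} {ω : Ω} (hω : ω ∈ hcyl I K) :
    ↑(K.filter fun t => t < 0) ⊆ {t : ℤ | t < 0 ∧ I t ω = true} := by
  intro t ht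
  simp only [Finset.coe_filter, Set.mem_setOf_eq] at ht
  obtain ⟨htK, htneg⟩ := ht
  have := hω t ⟨t, htK, le_refl t⟩
  exact ⟨htneg, by simp [this, htK]⟩

lemma hcyl_negtop {I : ℤ → Ω → Bool} {K : Finset ℤ} {ω : Ω} (hω : ω ∈ hcyl I K)
    {x : ℤ} (hx : I x ω = true) (hxK : x ∉ K) : ∀ u ∈ K, x < u := by
  intro u huK
  by_contra h
  push_neg at h
  have := hω x ⟨u, huK, h⟩
  rw [hx] at this
  exact hxK (by simpa using this.symm)

/-- Decomposition of the event `{S₋ ≥ j, S₊ = m, I₀ = 1}` into half-cylinders. -/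
lemma decomp (I : ℤ → Ω → Bool) (j m : ℕ) :
    {ω | (j : ℕ∞) ≤ SminusFn I ω ∧ SplusFn I ω = (m : ℕ∞) ∧ I 0 ω = true}
      = ⋃ K : Idx j m, hcyl I K.1 := by
  ext ω
  simp only [Set.mem_setOf_eq, Set.mem_iUnion]
  constructor
  · rintro ⟨hjm, hm, h0⟩
    simp only [SplusFn] at hm
    -- positive part
    have hfin : {t : ℤ | 0 < t ∧ I t ω = true}.Finite := Set.finite_of_encard_eq_coe hm
    set Gp : Finset ℤ := hfin.toFinset with hGp
    have hGpcard : Gp.card = m := by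
      have := hfin.encard_eq_coe_toFinset_card
      rw [hm] at this
      exact_mod_cast this.symm
    -- negative part
    obtain ⟨F, hFS, hFcard, hFmax⟩ := topj j {t : ℤ | t < 0 ∧ I t ω = true}
      (fun x hx => hx.1) hjm
    set K : Finset ℤ := insert 0 (F ∪ Gp) with hK
    have hmemK : ∀ t : ℤ, t ∈ K ↔ (t = 0 ∨ t ∈ F ∨ t ∈ Gp) := by
      intro t; simp [hK, Finset.mem_insert, Finset.mem_union]
    have hFneg : ∀ t ∈ F, t < 0 := fun t ht => (hFS ht).1
    have hGppos : ∀ t ∈ Gp, 0 < t := by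
      intro t ht
      rw [hGp, Set.Finite.mem_toFinset] at ht
      exact ht.1
    have h0K : (0 : ℤ) ∈ K := by rw [hmemK]; left; rfl
    have hc1 : (K.filter fun t => t < 0).card = j := by
      have : K.filter (fun t => t < 0) = F := by
        ext t
        simp only [Finset.mem_filter, hmemK]
        constructor
        · rintro ⟨rfl | ht | ht, htneg⟩
          · omega
          · exact ht
          · exact absurd (hGppos t ht) (by omega)
        · intro ht
          exact ⟨Or.inr (Or.inl ht), hFneg t ht⟩
      rw [this, hFcard]
    have hc2 : (K.filter fun t => 0 < t).card = m := by
      have : K.filter (fun t => 0 < t) = Gp := by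
        ext t
        simp only [Finset.mem_filter, hmemK]
        constructor
        · rintro ⟨rfl | ht | ht, htpos⟩
          · omega
          · exact absurd (hFneg t ht) (by omega)
          · exact ht
        · intro ht
          exact ⟨Or.inr (Or.inr ht), hGppos t ht⟩
      rw [this, hGpcard]
    have hhcyl : ω ∈ hcyl I K := by
      rintro t ⟨u, huK, hut⟩
      rcases lt_trichotomy t 0 with htneg | rfl | htpos
      · -- t < 0
        have htK : t ∈ K ↔ t ∈ F := by
          rw [hmemK]
          constructor
          · rintro (rfl | h | h)
            · omega
            · exact h
            · exact absurd (hGppos t h) (by omega)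
          · intro h; exact Or.inr (Or.inl h)
        by_cases htF : t ∈ F
        · have : I t ω = true := ((hFS htF).2 : _)
          rw [this]
          simp [htK.2 htF]
        · have hIt : I t ω = false := by
            by_contra h
            have hIt' : I t ω = true := by
              cases h' : I t ω
              · exact absurd h' h
              · rfl
            -- t is a negative one not in F, hence below all of F; but u ≤ t, u ∈ K, u < 0 ⇒ u ∈ F
            have huneg : u < 0 := lt_of_le_of_lt hut htneg
            have huF : u ∈ F := by
              rw [hmemK] at huK
              rcases huK with rfl | h'' | h''
              · omega
              · exact h''
              · exact absurd (hGppos u h'') (by omega)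
            have := hFmax t ⟨htneg, hIt'⟩ htF u huF
            omega
          rw [hIt]
          have : t ∉ K := fun h => htF (htK.1 h)
          simp [this]
      · simp [h0K, h0]
      · -- 0 < t
        have htK : t ∈ K ↔ t ∈ Gp := by
          rw [hmemK]
          constructor
          · rintro (rfl | h | h)
            · omega
            · exact absurd (hFneg t h) (by omega)
            · exact h
          · intro h; exact Or.inr (Or.inr h)
        by_cases htGp : t ∈ Gp
        · have hIt : I t ω = true := by
            have := (Set.Finite.mem_toFinset hfin).1 htGp
            exact this.2
          simp [hIt, htK.2 htGp]
        · have hIt : I t ω = false := by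
            cases h' : I t ω
            · rfl
            · exact absurd ((Set.Finite.mem_toFinset hfin).2 ⟨htpos, h'⟩) htGp
          have : t ∉ K := fun h => htGp (htK.1 h)
          simp [hIt, this]
    exact ⟨⟨K, h0K, hc1, hc2⟩, hhcyl⟩
  · rintro ⟨⟨K, h0K, hnegK, hposK⟩, hω⟩
    refine ⟨?_, ?_, hcyl_zero h0K hω⟩
    · calc (j : ℕ∞) = (K.filter fun t => t < 0).card := by rw [hnegK]
        _ = (↑(K.filter fun t => t < 0) : Set ℤ).encard :=
            (Set.encard_coe_eq_coe_finsetCard _).symm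
        _ ≤ SminusFn I ω := Set.encard_mono (hcyl_negsub hω)
    · rw [SplusFn, hcyl_pos h0K hω, Set.encard_coe_eq_coe_finsetCard, hposK]

lemma decomp_disjoint (I : ℤ → Ω → Bool) (j m : ℕ) :
    Pairwise (Function.onFun Disjoint fun K : Idx j m => hcyl I K.1) := by
  intro K K' hKK'
  rw [Function.onFun, Set.disjoint_left]
  intro ω hω hω'
  refine hKK' (Subtype.ext ?_)
  obtain ⟨K, h0K, hnegK, hposK⟩ := K
  obtain ⟨K', h0K', hnegK', hposK'⟩ := K'
  -- positive parts agree
  have hpos_eq : K.filter (fun t => 0 < t) = K'.filter (fun t => 0 < t) := by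
    have h1 := hcyl_pos h0K hω
    have h2 := hcyl_pos h0K' hω'
    exact Finset.coe_injective (h1 ▸ h2 ▸ rfl)
  -- negative parts agree
  have hneg_sub : ∀ {A B : Finset ℤ} (h0A : 0 ∈ A) (h0B : 0 ∈ B)
      (hA : ω ∈ hcyl I A) (hB : ω ∈ hcyl I B)
      (hcA : (A.filter fun t => t < 0).card = j) (hcB : (B.filter fun t => t < 0).card = j),
      A.filter (fun t => t < 0) ⊆ B.filter (fun t => t < 0) := by
    intro A B h0A h0B hA hB hcA hcB
    by_contra hsub
    obtain ⟨x, hxA, hxB⟩ := Finset.not_subset.1 hsub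
    simp only [Finset.mem_filter] at hxA
    obtain ⟨hxAK, hxneg⟩ := hxA
    have hIx : I x ω = true := by
      have := hA x ⟨x, hxAK, le_refl x⟩
      simp [this, hxAK]
    have hxB' : x ∉ B := fun h => hxB (Finset.mem_filter.2 ⟨h, hxneg⟩)
    have hxlt : ∀ u ∈ B, x < u := hcyl_negtop hB hIx hxB'
    -- every element of B.filter (<0) is in A.filter (<0) and distinct from x
    have hBsubA : B.filter (fun t => t < 0) ⊆ (A.filter fun t => t < 0).erase x := by
      intro y hy
      simp only [Finset.mem_filter] at hy
      obtain ⟨hyB, hyneg⟩ := hy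
      have hIy : I y ω = true := by
        have := hB y ⟨y, hyB, le_refl y⟩
        simp [this, hyB]
      have hyA : y ∈ A := by
        by_contra hyA
        have := hcyl_negtop hA hIy hyA x hxAK
        have := hxlt y hyB
        omega
      refine Finset.mem_erase.2 ⟨?_, Finset.mem_filter.2 ⟨hyA, hyneg⟩⟩
      intro h
      rw [h] at hyB
      exact hxB' hyB
    have hxmem : x ∈ A.filter (fun t => t < 0) := Finset.mem_filter.2 ⟨hxAK, hxneg⟩
    have hjpos : 0 < j := by rw [← hcA]; exact Finset.card_pos.2 ⟨x, hxmem⟩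
    have := Finset.card_le_card hBsubA
    rw [hcB, Finset.card_erase_of_mem hxmem, hcA] at this
    omega
  have hneg_eq : K.filter (fun t => t < 0) = K'.filter (fun t => t < 0) :=
    Finset.Subset.antisymm (hneg_sub h0K h0K' hω hω' hnegK hnegK')
      (hneg_sub h0K' h0K hω' hω hnegK' hnegK)
  -- conclude K = K'
  ext t
  rcases lt_trichotomy t 0 with ht | rfl | ht
  · constructor
    · intro h
      have hx : t ∈ K.filter (fun u => u < 0) := Finset.mem_filter.2 ⟨h, ht⟩
      rw [hneg_eq] at hx
      exact (Finset.mem_filter.1 hx).1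
    · intro h
      have hx : t ∈ K'.filter (fun u => u < 0) := Finset.mem_filter.2 ⟨h, ht⟩
      rw [← hneg_eq] at hx
      exact (Finset.mem_filter.1 hx).1
  · simp [h0K, h0K']
  · constructor
    · intro h
      have hx : t ∈ K.filter (fun u => 0 < u) := Finset.mem_filter.2 ⟨h, ht⟩
      rw [hpos_eq] at hx
      exact (Finset.mem_filter.1 hx).1
    · intro h
      have hx : t ∈ K'.filter (fun u => 0 < u) := Finset.mem_filter.2 ⟨h, ht⟩
      rw [← hpos_eq] at hx
      exact (Finset.mem_filter.1 hx).1


lemma sub_inj (s : ℤ) : Function.Injective fun t : ℤ => t - s := by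
  intro a b h; dsimp at h; omega

section Peel

variable {K : Finset ℤ} {s : ℤ}

lemma peelL_zero (hsK : s ∈ K) : (0 : ℤ) ∈ K.image (fun t => t - s) := by
  refine Finset.mem_image.2 ⟨s, hsK, by ring⟩

lemma peelL_neg (h0 : 0 ∈ K) (hsK : s ∈ K) (hs : s < 0)
    (hgap : ∀ t ∈ K, s < t → 0 ≤ t) :
    (K.image (fun t => t - s)).filter (fun t => t < 0)
      = ((K.filter fun t => t < 0).erase s).image (fun t => t - s) := by
  ext u
  simp only [Finset.mem_filter, Finset.mem_image, Finset.mem_erase]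
  constructor
  · rintro ⟨⟨t, htK, rfl⟩, hu⟩
    have hts : t < s := by omega
    have htneg : t < 0 := by omega
    exact ⟨t, ⟨by omega, htK, htneg⟩, rfl⟩
  · rintro ⟨t, ⟨hts, htK, htneg⟩, rfl⟩
    have : ¬ (s < t) := fun h => by have := hgap t htK h; omega
    exact ⟨⟨t, htK, rfl⟩, by omega⟩

lemma peelL_pos (h0 : 0 ∈ K) (hsK : s ∈ K) (hs : s < 0)
    (hgap : ∀ t ∈ K, s < t → 0 ≤ t) :
    (K.image (fun t => t - s)).filter (fun t => 0 < t)
      = (insert 0 (K.filter fun t => 0 < t)).image (fun t => t - s) := by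
  ext u
  simp only [Finset.mem_filter, Finset.mem_image, Finset.mem_insert]
  constructor
  · rintro ⟨⟨t, htK, rfl⟩, hu⟩
    have hst : s < t := by omega
    have := hgap t htK hst
    rcases eq_or_lt_of_le this with h | h
    · exact ⟨t, Or.inl h.symm, rfl⟩
    · exact ⟨t, Or.inr ⟨htK, h⟩, rfl⟩
  · rintro ⟨t, ht, rfl⟩
    rcases ht with rfl | ⟨htK, htpos⟩
    · exact ⟨⟨0, h0, rfl⟩, by omega⟩
    · exact ⟨⟨t, htK, rfl⟩, by omega⟩

lemma peelL_min (h0 : 0 ∈ K) (hsK : s ∈ K) (hs : s < 0)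
    (hgap : ∀ t ∈ K, s < t → 0 ≤ t) :
    (-s) ∈ K.image (fun t => t - s)
    ∧ (∀ u ∈ (K.image fun t => t - s), 0 < u → -s ≤ u) := by
  constructor
  · exact Finset.mem_image.2 ⟨0, h0, by ring⟩
  · rintro u hu hupos
    obtain ⟨t, htK, rfl⟩ := Finset.mem_image.1 hu
    have := hgap t htK (by omega)
    omega

lemma peelR_zero (hsK : s ∈ K) : (0 : ℤ) ∈ K.image (fun t => t - s) :=
  peelL_zero hsK

lemma peelR_pos (h0 : 0 ∈ K) (hsK : s ∈ K) (hs : 0 < s)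
    (hgap : ∀ t ∈ K, t < s → t ≤ 0) :
    (K.image (fun t => t - s)).filter (fun t => 0 < t)
      = ((K.filter fun t => 0 < t).erase s).image (fun t => t - s) := by
  ext u
  simp only [Finset.mem_filter, Finset.mem_image, Finset.mem_erase]
  constructor
  · rintro ⟨⟨t, htK, rfl⟩, hu⟩
    exact ⟨t, ⟨by omega, htK, by omega⟩, rfl⟩
  · rintro ⟨t, ⟨hts, htK, htpos⟩, rfl⟩
    have : ¬ (t < s) := fun h => by have := hgap t htK h; omega
    exact ⟨⟨t, htK, rfl⟩, by omega⟩

lemma peelR_neg (h0 : 0 ∈ K) (hsK : s ∈ K) (hs : 0 < s)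
    (hgap : ∀ t ∈ K, t < s → t ≤ 0) :
    (K.image (fun t => t - s)).filter (fun t => t < 0)
      = (insert 0 (K.filter fun t => t < 0)).image (fun t => t - s) := by
  ext u
  simp only [Finset.mem_filter, Finset.mem_image, Finset.mem_insert]
  constructor
  · rintro ⟨⟨t, htK, rfl⟩, hu⟩
    have := hgap t htK (by omega)
    rcases eq_or_lt_of_le this with h | h
    · exact ⟨t, Or.inl h, rfl⟩
    · exact ⟨t, Or.inr ⟨htK, h⟩, rfl⟩
  · rintro ⟨t, ht, rfl⟩
    rcases ht with rfl | ⟨htK, htneg⟩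
    · exact ⟨⟨0, h0, rfl⟩, by omega⟩
    · exact ⟨⟨t, htK, rfl⟩, by omega⟩

lemma peelR_max (h0 : 0 ∈ K) (hsK : s ∈ K) (hs : 0 < s)
    (hgap : ∀ t ∈ K, t < s → t ≤ 0) :
    (-s) ∈ K.image (fun t => t - s)
    ∧ (∀ u ∈ (K.image fun t => t - s), u < 0 → u ≤ -s) := by
  constructor
  · exact Finset.mem_image.2 ⟨0, h0, by ring⟩
  · rintro u hu huneg
    obtain ⟨t, htK, rfl⟩ := Finset.mem_image.1 hu
    have := hgap t htK (by omega)
    omega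

lemma image_sub_sub (K : Finset ℤ) (s : ℤ) :
    (K.image (fun t => t - s)).image (fun t => t - (-s)) = K := by
  rw [Finset.image_image]
  have : ((fun t : ℤ => t - (-s)) ∘ (fun t => t - s)) = id := by
    funext t; simp [Function.comp]
  rw [this, Finset.image_id]

/-- Specification of the largest negative element. -/
lemma negmax_spec (K : Finset ℤ) (hne : (K.filter fun t => t < 0).Nonempty) :
    (K.filter fun t => t < 0).max' hne ∈ K ∧ (K.filter fun t => t < 0).max' hne < 0 ∧
      ∀ t ∈ K, (K.filter fun t => t < 0).max' hne < t → 0 ≤ t := by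
  have hmem := Finset.max'_mem _ hne
  rw [Finset.mem_filter] at hmem
  refine ⟨hmem.1, hmem.2, ?_⟩
  intro t htK hlt
  by_contra h
  push_neg at h
  have hmem2 : t ∈ K.filter (fun t => t < 0) := Finset.mem_filter.2 ⟨htK, h⟩
  have := Finset.le_max' _ t hmem2
  omega

/-- Specification of the smallest positive element. -/
lemma posmin_spec (K : Finset ℤ) (hne : (K.filter fun t => 0 < t).Nonempty) :
    (K.filter fun t => 0 < t).min' hne ∈ K ∧ 0 < (K.filter fun t => 0 < t).min' hne ∧
      ∀ t ∈ K, t < (K.filter fun t => 0 < t).min' hne → t ≤ 0 := by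
  have hmem := Finset.min'_mem _ hne
  rw [Finset.mem_filter] at hmem
  refine ⟨hmem.1, hmem.2, ?_⟩
  intro t htK hlt
  by_contra h
  push_neg at h
  have hmem2 : t ∈ K.filter (fun t => 0 < t) := Finset.mem_filter.2 ⟨htK, h⟩
  have := Finset.min'_le _ t hmem2
  omega

/-- The peel bijection between `Idx (j+1) m` and `Idx j (m+1)`. -/
def eIdx (j m : ℕ) : Idx (j + 1) m ≃ Idx j (m + 1) where
  toFun K := by
    refine ⟨K.1.image (fun t => t - (K.1.filter fun t => t < 0).max'
      (Finset.card_pos.1 (by rw [K.2.2.1]; omega))), ?_, ?_, ?_⟩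
    · exact peelL_zero (negmax_spec K.1 _).1
    · obtain ⟨hsK, hs, hgap⟩ := negmax_spec K.1 (Finset.card_pos.1 (by rw [K.2.2.1]; omega))
      have hmem2 : _ ∈ K.1.filter (fun t => t < 0) := Finset.mem_filter.2 ⟨hsK, hs⟩
      rw [peelL_neg K.2.1 hsK hs hgap,
        Finset.card_image_of_injective _ (sub_inj _),
        Finset.card_erase_of_mem hmem2, K.2.2.1]
      omega
    · obtain ⟨hsK, hs, hgap⟩ := negmax_spec K.1 (Finset.card_pos.1 (by rw [K.2.2.1]; omega))
      rw [peelL_pos K.2.1 hsK hs hgap,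
        Finset.card_image_of_injective _ (sub_inj _),
        Finset.card_insert_of_notMem (by simp), K.2.2.2]
  invFun K := by
    refine ⟨K.1.image (fun t => t - (K.1.filter fun t => 0 < t).min'
      (Finset.card_pos.1 (by rw [K.2.2.2]; omega))), ?_, ?_, ?_⟩
    · exact peelR_zero (posmin_spec K.1 _).1
    · obtain ⟨hsK, hs, hgap⟩ := posmin_spec K.1 (Finset.card_pos.1 (by rw [K.2.2.2]; omega))
      rw [peelR_neg K.2.1 hsK hs hgap,
        Finset.card_image_of_injective _ (sub_inj _),
        Finset.card_insert_of_notMem (by simp), K.2.2.1]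
    · obtain ⟨hsK, hs, hgap⟩ := posmin_spec K.1 (Finset.card_pos.1 (by rw [K.2.2.2]; omega))
      have hmem2 : _ ∈ K.1.filter (fun t => 0 < t) := Finset.mem_filter.2 ⟨hsK, hs⟩
      rw [peelR_pos K.2.1 hsK hs hgap,
        Finset.card_image_of_injective _ (sub_inj _),
        Finset.card_erase_of_mem hmem2, K.2.2.2]
      omega
  left_inv K := by
    apply Subtype.ext
    dsimp only
    set s := (K.1.filter fun t => t < 0).max'
      (Finset.card_pos.1 (by rw [K.2.2.1]; omega)) with hsdef
    obtain ⟨hsK, hs, hgap⟩ := negmax_spec K.1 (Finset.card_pos.1 (by rw [K.2.2.1]; omega))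
    rw [← hsdef] at hsK hs hgap
    set L := K.1.image (fun t => t - s) with hLdef
    have hmin : ((L.filter fun t => 0 < t).min'
        (Finset.card_pos.1 (by
          obtain ⟨hsK', hs', hgap'⟩ := negmax_spec K.1 (Finset.card_pos.1 (by rw [K.2.2.1]; omega))
          rw [peelL_pos K.2.1 hsK' hs' hgap',
            Finset.card_image_of_injective _ (sub_inj _),
            Finset.card_insert_of_notMem (by simp), K.2.2.2]
          omega))) = -s := by
      apply le_antisymm
      · exact Finset.min'_le _ _ (Finset.mem_filter.2
          ⟨(peelL_min K.2.1 hsK hs hgap).1, by omega⟩)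
      · apply Finset.le_min'
        intro y hy
        rw [Finset.mem_filter] at hy
        exact (peelL_min K.2.1 hsK hs hgap).2 y hy.1 hy.2
    rw [hmin]
    exact image_sub_sub K.1 s
  right_inv K := by
    apply Subtype.ext
    dsimp only
    set s := (K.1.filter fun t => 0 < t).min'
      (Finset.card_pos.1 (by rw [K.2.2.2]; omega)) with hsdef
    obtain ⟨hsK, hs, hgap⟩ := posmin_spec K.1 (Finset.card_pos.1 (by rw [K.2.2.2]; omega))
    rw [← hsdef] at hsK hs hgap
    set L := K.1.image (fun t => t - s) with hLdef
    have hmax : ((L.filter fun t => t < 0).max'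
        (Finset.card_pos.1 (by
          obtain ⟨hsK', hs', hgap'⟩ := posmin_spec K.1 (Finset.card_pos.1 (by rw [K.2.2.2]; omega))
          rw [peelR_neg K.2.1 hsK' hs' hgap',
            Finset.card_image_of_injective _ (sub_inj _),
            Finset.card_insert_of_notMem (by simp), K.2.2.1]
          omega))) = -s := by
      apply le_antisymm
      · apply Finset.max'_le
        intro y hy
        rw [Finset.mem_filter] at hy
        exact (peelR_max K.2.1 hsK hs hgap).2 y hy.1 hy.2
      · exact Finset.le_max' _ _ (Finset.mem_filter.2
          ⟨(peelR_max K.2.1 hsK hs hgap).1, by omega⟩)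
    rw [hmax]
    exact image_sub_sub K.1 s

end Peel


lemma SiFn_split {Ω : Type*} (I : ℤ → Ω → Bool) (ω : Ω) (h0 : I 0 ω = true) :
    SiFn I ω = SminusFn I ω + SplusFn I ω + 1 := by
  have hU : {t : ℤ | I t ω = true}
      = ({t : ℤ | t < 0 ∧ I t ω = true} ∪ {t : ℤ | 0 < t ∧ I t ω = true}) ∪ {0} := by
    ext t
    simp only [Set.mem_union, Set.mem_setOf_eq, Set.mem_singleton_iff]
    constructor
    · intro h
      rcases lt_trichotomy t 0 with ht | rfl | ht
      · exact Or.inl (Or.inl ⟨ht, h⟩)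
      · exact Or.inr rfl
      · exact Or.inl (Or.inr ⟨ht, h⟩)
    · rintro ((⟨_, h⟩ | ⟨_, h⟩) | rfl)
      · exact h
      · exact h
      · exact h0
  have hd1 : Disjoint {t : ℤ | t < 0 ∧ I t ω = true} {t : ℤ | 0 < t ∧ I t ω = true} := by
    rw [Set.disjoint_left]
    rintro t ⟨ht, _⟩ ⟨ht', _⟩
    omega
  have hd2 : Disjoint ({t : ℤ | t < 0 ∧ I t ω = true} ∪ {t : ℤ | 0 < t ∧ I t ω = true})
      ({0} : Set ℤ) := by
    rw [Set.disjoint_right]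
    rintro t rfl
    rintro (⟨ht, _⟩ | ⟨ht, _⟩) <;> omega
  rw [SiFn, hU, Set.encard_union_eq hd2, Set.encard_union_eq hd1, Set.encard_singleton]
  rfl

section Main

variable {Ω : Type*} [MeasurableSpace Ω]

theorem main (P : Measure Ω) [IsProbabilityMeasure P]
    (I : ℤ → Ω → Bool)
    {Ωn : ℕ → Type*} [∀ n, MeasurableSpace (Ωn n)]
    (Pn : ∀ n, Measure (Ωn n))
    (In : ∀ n, ℤ → Ωn n → Bool)
    (hI : ∀ t, Measurable (I t)) (hPn : ∀ n, IsProbabilityMeasure (Pn n))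
    (hpos : ∀ n, 0 < Pn n {ω | In n 0 ω = true})
    (hstat : ∀ n (F : Finset ℤ) (ε : ℤ → Bool) (k : ℤ),
      Pn n {ω | ∀ t ∈ F, In n t ω = ε t} = Pn n {ω | ∀ t ∈ F, In n (t + k) ω = ε t})
    (hconv : ∀ (F : Finset ℤ) (ε : ℤ → Bool),
      Tendsto (fun n =>
          Pn n ({ω | ∀ t ∈ F, In n t ω = ε t} ∩ {ω | In n 0 ω = true})
            / Pn n {ω | In n 0 ω = true}) atTop
        (nhds (P {ω | ∀ t ∈ F, I t ω = ε t})))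
    (k : ℕ) (hk : 1 ≤ k) :
    P {ω | SiFn I ω = (k : ℕ∞)}
        = (k : ℝ≥0∞) * (P {ω | SplusFn I ω = ((k - 1 : ℕ) : ℕ∞)}
            - P {ω | SplusFn I ω = (k : ℕ∞)}) := by
  haveI := hPn
  -- `I₀ = 1` a.s.
  have hI0meas : MeasurableSet {ω | I 0 ω = true} := hI 0 (measurableSet_singleton true)
  have hone : P {ω | I 0 ω = true} = 1 := by
    have h := hconv {0} (fun _ => true)
    have hconst : ∀ n, Pn n ({ω | ∀ t ∈ ({0} : Finset ℤ), In n t ω = (fun _ => true) t}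
        ∩ {ω | In n 0 ω = true}) / Pn n {ω | In n 0 ω = true} = 1 := by
      intro n
      have hset : {ω | ∀ t ∈ ({0} : Finset ℤ), In n t ω = (fun _ => true) t}
          = {ω | In n 0 ω = true} := by
        ext ω; simp
      rw [hset, inter_self]
      exact ENNReal.div_self (hpos n).ne' (measure_ne_top _ _)
    rw [tendsto_congr hconst] at h
    have h2 := tendsto_nhds_unique h tendsto_const_nhds
    rw [← h2]
    congr 1
    ext ω; simp
  have hinter : ∀ A : Set Ω, P A = P (A ∩ {ω | I 0 ω = true}) := by
    intro A
    refine le_antisymm ?_ (measure_mono inter_subset_left)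
    calc P A ≤ P (A ∩ {ω | I 0 ω = true}) + P (A \ {ω | I 0 ω = true}) :=
        measure_le_inter_add_diff P A _
      _ ≤ P (A ∩ {ω | I 0 ω = true}) + P ({ω | I 0 ω = true}ᶜ) :=
          add_le_add le_rfl (measure_mono (diff_subset_compl A {ω : Ω | I 0 ω = true}))
      _ = P (A ∩ {ω | I 0 ω = true}) := by
          rw [prob_compl_eq_one_sub hI0meas, hone]; simp
  -- the basic events
  set Aset : ℕ → ℕ → Set Ω := fun j m =>
    {ω | (j : ℕ∞) ≤ SminusFn I ω ∧ SplusFn I ω = (m : ℕ∞) ∧ I 0 ω = true} with hAset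
  have hAdecomp : ∀ j m, Aset j m = ⋃ K : Idx j m, hcyl I K.1 := fun j m => decomp I j m
  have hAmeas : ∀ j m, MeasurableSet (Aset j m) := fun j m => by
    rw [hAdecomp]; exact MeasurableSet.iUnion fun K => measurableSet_hcyl hI K.1
  have hAsum : ∀ j m, P (Aset j m) = ∑' K : Idx j m, P (hcyl I K.1) := fun j m => by
    rw [hAdecomp]
    exact measure_iUnion (decomp_disjoint I j m) fun K => measurableSet_hcyl hI K.1
  -- shifting one negative point across the origin
  have hstep : ∀ j m, P (Aset (j+1) m) = P (Aset j (m+1)) := by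
    intro j m
    rw [hAsum, hAsum, ← Equiv.tsum_eq (eIdx j m) (fun K : Idx j (m+1) => P (hcyl I K.1))]
    refine tsum_congr fun K => ?_
    have hne : (K.1.filter fun t => t < 0).Nonempty :=
      Finset.card_pos.1 (by rw [K.2.2.1]; omega)
    exact shift_hcyl P I Pn In hstat hconv hI K.1 _ K.2.1 (negmax_spec K.1 hne).1
  have hshift : ∀ j m, P (Aset j m) = P (Aset 0 (m + j)) := by
    intro j
    induction j with
    | zero => intro m; norm_num
    | succ j ih =>
      intro m
      rw [hstep j m, ih (m+1)]
      have h3 : m + 1 + j = m + (j + 1) := by omega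
      rw [h3]
  -- relation to the distribution of S₊
  have hg : ∀ m : ℕ, P {ω | SplusFn I ω = (m : ℕ∞)} = P (Aset 0 m) := by
    intro m
    rw [hinter {ω | SplusFn I ω = (m : ℕ∞)}]
    congr 1
    ext ω
    simp only [hAset, mem_inter_iff, mem_setOf_eq]
    constructor
    · rintro ⟨h1, h2⟩; exact ⟨by simp, h1, h2⟩
    · rintro ⟨_, h1, h2⟩; exact ⟨h1, h2⟩
  set Eset : ℕ → ℕ → Set Ω := fun j m =>
    {ω | SminusFn I ω = (j : ℕ∞) ∧ SplusFn I ω = (m : ℕ∞) ∧ I 0 ω = true} with hEset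
  have hEdiff : ∀ j m, Eset j m = Aset j m \ Aset (j+1) m := by
    intro j m
    ext ω
    simp only [hEset, hAset, mem_diff, mem_setOf_eq, not_and]
    constructor
    · rintro ⟨h1, h2, h3⟩
      refine ⟨⟨le_of_eq h1.symm, h2, h3⟩, ?_⟩
      intro hle
      rw [h1] at hle
      exfalso
      have hcon : ((j : ℕ) + 1 : ℕ∞) ≤ (j : ℕ∞) := by
        refine le_trans (le_of_eq ?_) hle
        push_cast
        rfl
      exact absurd ((ENat.add_one_le_iff (ENat.coe_ne_top j)).1 hcon) (lt_irrefl _)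
    · rintro ⟨⟨h1, h2, h3⟩, h4⟩
      refine ⟨?_, h2, h3⟩
      rcases eq_or_lt_of_le h1 with h | h
      · exact h.symm
      · exact absurd h2 (fun hx => (h4 (by
          push_cast
          exact (ENat.add_one_le_iff (ENat.coe_ne_top j)).2 h) hx) h3)
  have hEmeas : ∀ j m, MeasurableSet (Eset j m) := fun j m => by
    rw [hEdiff]; exact (hAmeas j m).diff (hAmeas (j+1) m)
  have hsplitP : ∀ j m, P (Eset j m) + P (Aset (j+1) m) = P (Aset j m) := by
    intro j m
    have hU : Aset j m = Eset j m ∪ Aset (j+1) m := by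
      ext ω
      simp only [hEset, hAset, mem_union, mem_setOf_eq]
      constructor
      · rintro ⟨h1, h2, h3⟩
        rcases eq_or_lt_of_le h1 with h | h
        · exact Or.inl ⟨h.symm, h2, h3⟩
        · refine Or.inr ⟨?_, h2, h3⟩
          push_cast
          exact (ENat.add_one_le_iff (ENat.coe_ne_top j)).2 h
      · rintro (⟨h1, h2, h3⟩ | ⟨h1, h2, h3⟩)
        · exact ⟨le_of_eq h1.symm, h2, h3⟩
        · refine ⟨le_trans ?_ h1, h2, h3⟩
          exact_mod_cast Nat.le_succ j
    have hd : Disjoint (Eset j m) (Aset (j+1) m) := by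
      rw [Set.disjoint_left]
      rintro ω ⟨h1, _, _⟩ ⟨h1', _, _⟩
      rw [h1] at h1'
      have : ((j : ℕ) + 1 : ℕ∞) ≤ (j : ℕ∞) := by
        refine le_trans (le_of_eq ?_) h1'
        push_cast
        rfl
      exact absurd ((ENat.add_one_le_iff (ENat.coe_ne_top j)).1 this) (lt_irrefl _)
    rw [hU, measure_union hd (hAmeas (j+1) m)]
  have hpiece : ∀ j, j < k → P (Eset j (k-1-j)) = P (Aset 0 (k-1)) - P (Aset 0 k) := by
    intro j hj
    have h1 := hsplitP j (k-1-j)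
    rw [hshift j (k-1-j), hshift (j+1) (k-1-j)] at h1
    have e1 : k-1-j+j = k-1 := by omega
    have e2 : k-1-j+(j+1) = k := by omega
    rw [e1, e2] at h1
    exact ENNReal.eq_sub_of_add_eq (measure_ne_top P _) h1
  have hSiEq : {ω | SiFn I ω = (k : ℕ∞)} ∩ {ω | I 0 ω = true}
      = ⋃ j ∈ Finset.range k, Eset j (k-1-j) := by
    ext ω
    simp only [hEset, mem_inter_iff, mem_setOf_eq, mem_iUnion, Finset.mem_range]
    constructor
    · rintro ⟨hSi, h0⟩
      rw [SiFn_split I ω h0] at hSi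
      have hminf : SminusFn I ω ≠ ⊤ := by
        intro h; rw [h] at hSi; simp at hSi
      have hpinf : SplusFn I ω ≠ ⊤ := by
        intro h; rw [h] at hSi; simp at hSi
      have ha : ((SminusFn I ω).toNat : ℕ∞) = SminusFn I ω := ENat.coe_toNat hminf
      have hb : ((SplusFn I ω).toNat : ℕ∞) = SplusFn I ω := ENat.coe_toNat hpinf
      set a := (SminusFn I ω).toNat
      set b := (SplusFn I ω).toNat
      have hab : a + b + 1 = k := by
        rw [← ha, ← hb] at hSi
        exact_mod_cast hSi
      refine ⟨a, by omega, ha.symm, ?_, h0⟩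
      rw [← hb]
      congr 1
      omega
    · rintro ⟨j, hj, h1, h2, h0⟩
      refine ⟨?_, h0⟩
      rw [SiFn_split I ω h0, h1, h2]
      have h3 : j + (k-1-j) + 1 = k := by omega
      exact_mod_cast congrArg (Nat.cast : ℕ → ℕ∞) h3
  have hdisj : (↑(Finset.range k) : Set ℕ).Pairwise
      (Function.onFun Disjoint fun j => Eset j (k-1-j)) := by
    intro i _ j _ hij
    rw [Function.onFun, Set.disjoint_left]
    rintro ω ⟨h1, _, _⟩ ⟨h1', _, _⟩
    refine hij ?_
    have h5 := h1.symm.trans h1'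
    exact_mod_cast h5
  calc P {ω | SiFn I ω = (k : ℕ∞)}
      = P ({ω | SiFn I ω = (k : ℕ∞)} ∩ {ω | I 0 ω = true}) := hinter _
    _ = P (⋃ j ∈ Finset.range k, Eset j (k-1-j)) := by rw [hSiEq]
    _ = ∑ j ∈ Finset.range k, P (Eset j (k-1-j)) :=
        measure_biUnion_finset hdisj (fun j _ => hEmeas _ _)
    _ = ∑ _j ∈ Finset.range k, (P (Aset 0 (k-1)) - P (Aset 0 k)) :=
        Finset.sum_congr rfl (fun j hj => hpiece j (Finset.mem_range.1 hj))
    _ = (k : ℝ≥0∞) * (P (Aset 0 (k-1)) - P (Aset 0 k)) := by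
        rw [Finset.sum_const, Finset.card_range, nsmul_eq_mul]
    _ = (k : ℝ≥0∞) * (P {ω | SplusFn I ω = ((k - 1 : ℕ) : ℕ∞)}
          - P {ω | SplusFn I ω = (k : ℕ∞)}) := by
        rw [hg (k-1), hg k]

end Main

end ClusterAux

namespace ClusterAux

section Reflect

variable {Ω : Type*}

lemma SiFn_reflect (I : ℤ → Ω → Bool) (ω : Ω) : SiFn (fun t => I (-t)) ω = SiFn I ω := by
  rw [SiFn, SiFn]
  have h : {t : ℤ | I (-t) ω = true} = Neg.neg '' {t : ℤ | I t ω = true} := by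
    ext u
    simp only [Set.mem_image, Set.mem_setOf_eq]
    constructor
    · intro h; exact ⟨-u, h, neg_neg u⟩
    · rintro ⟨t, ht, rfl⟩; simpa using ht
  rw [h, Set.InjOn.encard_image (fun a _ b _ hab => neg_injective hab)]

lemma SplusFn_reflect (I : ℤ → Ω → Bool) (ω : Ω) :
    SplusFn (fun t => I (-t)) ω = SminusFn I ω := by
  rw [SplusFn, SminusFn]
  have h : {t : ℤ | 0 < t ∧ I (-t) ω = true} = Neg.neg '' {t : ℤ | t < 0 ∧ I t ω = true} := by
    ext u
    simp only [Set.mem_image, Set.mem_setOf_eq]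
    constructor
    · rintro ⟨hu, h⟩; exact ⟨-u, ⟨by omega, h⟩, neg_neg u⟩
    · rintro ⟨t, ⟨ht, h⟩, rfl⟩; exact ⟨by omega, by simpa using h⟩
  rw [h, Set.InjOn.encard_image (fun a _ b _ hab => neg_injective hab)]

lemma setrefl (f : ℤ → Ω → Bool) (F : Finset ℤ) (ε : ℤ → Bool) :
    {ω | ∀ t ∈ F, f (-t) ω = ε t}
      = {ω | ∀ u ∈ F.image (fun t : ℤ => -t), f u ω = ε (-u)} := by
  ext ω
  simp only [Set.mem_setOf_eq, Finset.mem_image]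
  constructor
  · rintro h u ⟨t, ht, rfl⟩
    simpa using h t ht
  · intro h t ht
    have := h (-t) ⟨t, ht, rfl⟩
    simpa using this

end Reflect

end ClusterAux


open ClusterAux

/-- Theorem 3.3(a): under Assumption 1, for `k ∈ ℕ`,
`P(Sⁱ = k) = k · [P(S₊ⁱ = k-1) - P(S₊ⁱ = k)]`, and the same identity with
`S₊ⁱ` replaced by `S₋ⁱ`. -/
theorem inspected_cluster_size_pmf
    {Ω : Type*} [MeasurableSpace Ω] (P : Measure Ω) [IsProbabilityMeasure P]
    (I : ℤ → Ω → Bool) (hI : ∀ t, Measurable (I t))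
    {Ωn : ℕ → Type*} [∀ n, MeasurableSpace (Ωn n)]
    (Pn : ∀ n, Measure (Ωn n)) (hPn : ∀ n, IsProbabilityMeasure (Pn n))
    (In : ∀ n, ℤ → Ωn n → Bool) (hIn : ∀ n t, Measurable (In n t))
    -- `P(I₀ⁿ = 1) > 0` for all `n`
    (hpos : ∀ n, 0 < Pn n {ω | In n 0 ω = true})
    -- stationarity of each `(Iₜⁿ)ₜ`
    (hstat : ∀ n (F : Finset ℤ) (ε : ℤ → Bool) (k : ℤ),
      Pn n {ω | ∀ t ∈ F, In n t ω = ε t} = Pn n {ω | ∀ t ∈ F, In n (t + k) ω = ε t})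
    -- convergence of the conditional finite-dimensional distributions
    (hconv : ∀ (F : Finset ℤ) (ε : ℤ → Bool),
      Tendsto (fun n =>
          Pn n ({ω | ∀ t ∈ F, In n t ω = ε t} ∩ {ω | In n 0 ω = true})
            / Pn n {ω | In n 0 ω = true}) atTop
        (nhds (P {ω | ∀ t ∈ F, I t ω = ε t})))

    (k : ℕ) (hk : 1 ≤ k) :
    P {ω | SiFn I ω = (k : ℕ∞)}
        = (k : ℝ≥0∞) * (P {ω | SplusFn I ω = ((k - 1 : ℕ) : ℕ∞)}
            - P {ω | SplusFn I ω = (k : ℕ∞)})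
    ∧ P {ω | SiFn I ω = (k : ℕ∞)}
        = (k : ℝ≥0∞) * (P {ω | SminusFn I ω = ((k - 1 : ℕ) : ℕ∞)}
            - P {ω | SminusFn I ω = (k : ℕ∞)}) := by
  constructor
  · exact main P I Pn In hI hPn hpos hstat hconv k hk
  · -- apply `main` to the time-reversed process
    have hpos' : ∀ n, 0 < Pn n {ω | In n (-0) ω = true} := by
      intro n; simpa using hpos n
    have hstat' : ∀ n (F : Finset ℤ) (ε : ℤ → Bool) (j : ℤ),
        Pn n {ω | ∀ t ∈ F, In n (-t) ω = ε t}
          = Pn n {ω | ∀ t ∈ F, In n (-(t + j)) ω = ε t} := by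
      intro n F ε j
      rw [setrefl (In n) F ε]
      rw [hstat n (F.image (fun t : ℤ => -t)) (fun u => ε (-u)) (-j)]
      congr 1
      ext ω
      simp only [Set.mem_setOf_eq, Finset.mem_image]
      constructor
      · intro h t ht
        have := h (-t) ⟨t, ht, rfl⟩
        simp only [neg_neg] at this
        rw [← this]
        congr 1
        ring
      · rintro h u ⟨t, ht, rfl⟩
        have := h t ht
        simp only [neg_neg]
        rw [← this]
        congr 1
        ring
    have hconv' : ∀ (F : Finset ℤ) (ε : ℤ → Bool),
        Tendsto (fun n =>
            Pn n ({ω | ∀ t ∈ F, In n (-t) ω = ε t} ∩ {ω | In n (-0) ω = true})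
              / Pn n {ω | In n (-0) ω = true}) atTop
          (nhds (P {ω | ∀ t ∈ F, I (-t) ω = ε t})) := by
      intro F ε
      have h := hconv (F.image (fun t : ℤ => -t)) (fun u => ε (-u))
      rw [← setrefl I F ε] at h
      refine h.congr fun n => ?_
      rw [← setrefl (In n) F ε]
      norm_num
    have h := main P (fun t => I (-t)) Pn (fun n t => In n (-t))
      (fun t => hI (-t)) hPn hpos' hstat' hconv' k hk
    have e1 : {ω | SiFn (fun t => I (-t)) ω = (k : ℕ∞)} = {ω | SiFn I ω = (k : ℕ∞)} := by
      ext ω; rw [Set.mem_setOf_eq, Set.mem_setOf_eq, SiFn_reflect]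
    have e2 : ∀ m : ℕ, {ω | SplusFn (fun t => I (-t)) ω = (m : ℕ∞)}
        = {ω | SminusFn I ω = (m : ℕ∞)} := by
      intro m; ext ω; rw [Set.mem_setOf_eq, Set.mem_setOf_eq, SplusFn_reflect]
    rw [e1, e2, e2] at h
    exact h
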